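/- arXiv:1908.09373 — 2 statements merged into one kernel-verified Lean document; each statement's English description precedes it below -/
import Mathlib

section
/- Let f(c) = log(1 + erf(c)) and define E(c) = −(f(c) + (1/4) f'(c)²). Then E'(c) < 0 for all c ∈ ℝ, i.e., E is strictly decreasing on ℝ and has no critical point. -/
open Real MeasureTheory

/-- The error function `erf x = (2/√π) ∫₀ˣ exp(−t²) dt`. -/
noncomputable def erf (x : ℝ) : ℝ := (2 / Real.sqrt Real.pi) * ∫ t in (0:ℝ)..x, Real.exp (-t^2)

/-- `f(c) = log(1 + erf c)`. -/
noncomputable def fErf (c : ℝ) : ℝ := Real.log (1 + erf c)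

/-- `f'(c) = (2/√π) exp(−c²)/(1 + erf c)`. -/
noncomputable def fErf' (c : ℝ) : ℝ := (2 / Real.sqrt Real.pi) * Real.exp (-c^2) / (1 + erf c)

/-- `f''(c) = −2c f'(c) − f'(c)²`. -/
noncomputable def fErf'' (c : ℝ) : ℝ := -2 * c * fErf' c - (fErf' c)^2

/-- `E(c) = −(f(c) + (1/4) f'(c)²)`. -/
noncomputable def Eerf (c : ℝ) : ℝ := -(fErf c + (1/4) * (fErf' c)^2)

section Aux
open Filter Set

/-- `φ c = (2/√π) exp (-c²)`, the derivative of `erf`. -/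
noncomputable def phiG (c : ℝ) : ℝ := (2 / Real.sqrt Real.pi) * Real.exp (-c^2)

/-- `Φ c = 1 + erf c`. -/
noncomputable def PhiG (c : ℝ) : ℝ := 1 + erf c

lemma sqrt_pi_pos : 0 < Real.sqrt Real.pi := Real.sqrt_pos.2 Real.pi_pos

lemma K_pos : 0 < 2 / Real.sqrt Real.pi := by positivity

lemma phiG_pos (c : ℝ) : 0 < phiG c := by
  unfold phiG; positivity

lemma gauss_cont : Continuous fun t : ℝ => Real.exp (-t^2) := by
  continuity

lemma gauss_integrable : MeasureTheory.Integrable (fun t : ℝ => Real.exp (-t^2)) := by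
  simpa using integrable_exp_neg_mul_sq (b := (1:ℝ)) one_pos

lemma hasDerivAt_erf (c : ℝ) : HasDerivAt erf (phiG c) c := by
  have h : HasDerivAt (fun x : ℝ => ∫ t in (0:ℝ)..x, Real.exp (-t^2))
      (Real.exp (-c^2)) c := by
    exact intervalIntegral.integral_hasDerivAt_right
      (gauss_cont.intervalIntegrable _ _)
      (gauss_cont.stronglyMeasurableAtFilter _ _)
      gauss_cont.continuousAt
  exact h.const_mul (2 / Real.sqrt Real.pi)

lemma hasDerivAt_PhiG (c : ℝ) : HasDerivAt PhiG (phiG c) c := by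
  exact (hasDerivAt_erf c).const_add 1

lemma hasDerivAt_phiG (c : ℝ) : HasDerivAt phiG (-2 * c * phiG c) c := by
  have h1 : HasDerivAt (fun x : ℝ => -x^2) (-(2*c)) c := by
    exact ((hasDerivAt_pow 2 c).neg).congr_deriv (by ring)
  have h2 := (h1.exp).const_mul (2 / Real.sqrt Real.pi)
  refine h2.congr_deriv ?_
  unfold phiG; ring

lemma integral_gauss_Iic_zero : ∫ t in Iic (0:ℝ), Real.exp (-t^2) = Real.sqrt Real.pi / 2 := by
  have h := integral_comp_neg_Ioi (0:ℝ) (fun t => Real.exp (-t^2))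
  simp only [neg_zero] at h
  rw [← h]
  have : ∀ x : ℝ, Real.exp (-(-x)^2) = Real.exp (-1 * x^2) := by intro x; ring_nf
  simp_rw [this]
  rw [integral_gaussian_Ioi 1]
  norm_num

lemma PhiG_eq (c : ℝ) :
    PhiG c = (2 / Real.sqrt Real.pi) * ∫ t in Iic c, Real.exp (-t^2) := by
  have hI := intervalIntegral.integral_Iic_sub_Iic (μ := volume) (f := fun t : ℝ => Real.exp (-t^2))
      (a := (0:ℝ)) (b := c) gauss_integrable.integrableOn gauss_integrable.integrableOn
  have hK : (2 / Real.sqrt Real.pi) * (Real.sqrt Real.pi / 2) = 1 := by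
    field_simp
  have : (∫ t in Iic c, Real.exp (-t^2))
      = Real.sqrt Real.pi / 2 + ∫ t in (0:ℝ)..c, Real.exp (-t^2) := by
    rw [← integral_gauss_Iic_zero, ← hI]; ring
  rw [this, PhiG, erf, mul_add, hK]

lemma PhiG_pos (c : ℝ) : 0 < PhiG c := by
  rw [PhiG_eq]
  refine mul_pos K_pos ?_
  have h1 : (0:ℝ) < ∫ t in (c-1)..c, Real.exp (-t^2) := by
    apply intervalIntegral.intervalIntegral_pos_of_pos_on
      (gauss_cont.intervalIntegrable _ _)
    · intro x _; positivity
    · linarith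
  have h2 : (∫ t in (c-1)..c, Real.exp (-t^2))
      = ∫ t in Ioc (c-1) c, Real.exp (-t^2) := by
    rw [intervalIntegral.integral_of_le (by linarith)]
  have h3 : (∫ t in Ioc (c-1) c, Real.exp (-t^2)) ≤ ∫ t in Iic c, Real.exp (-t^2) := by
    apply setIntegral_mono_set gauss_integrable.integrableOn
    · filter_upwards with x using by positivity
    · filter_upwards with x hx using hx.2
  linarith [h2 ▸ h1]

lemma PhiG_le {c : ℝ} (hc : c ≤ -1) :
    PhiG c ≤ (2 / Real.sqrt Real.pi) * Real.exp c := by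
  rw [PhiG_eq]
  have h1 : (∫ t in Iic c, Real.exp (-t^2)) ≤ ∫ t in Iic c, Real.exp t := by
    apply setIntegral_mono_on gauss_integrable.integrableOn
      (integrableOn_exp_Iic c)
      measurableSet_Iic
    · intro t ht
      exact Real.exp_le_exp.2 (by nlinarith [Set.mem_Iic.1 ht])
  have := mul_le_mul_of_nonneg_left h1 K_pos.le
  rw [integral_exp_Iic] at this
  exact this

lemma lim_pow_exp (n : ℕ) :
    Tendsto (fun c : ℝ => c^n * Real.exp c) atBot (nhds 0) := by
  have h2 : Tendsto (fun c : ℝ => (-1:ℝ)^n * ((-c)^n * Real.exp (-(-c)))) atBot (nhds 0) := by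
    have := ((tendsto_pow_mul_exp_neg_atTop_nhds_zero n).comp tendsto_neg_atBot_atTop).const_mul
      ((-1:ℝ)^n)
    simpa [Function.comp] using this
  refine h2.congr fun c => ?_
  have hp : ((-1:ℝ))^n * (-c)^n = c^n := by rw [← mul_pow]; ring_nf
  rw [neg_neg, ← mul_assoc, hp]

end Aux

section Chain
open Filter Set

noncomputable def qG (c : ℝ) : ℝ := 2 * c * PhiG c + phiG c
noncomputable def pG (c : ℝ) : ℝ := (1 + 2 * c^2) * PhiG c + c * phiG c
noncomputable def uG (c : ℝ) : ℝ := 2 * (PhiG c)^2 - (phiG c)^2 - 2 * c * phiG c * PhiG c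

lemma hasDerivAt_qG (c : ℝ) : HasDerivAt qG (2 * PhiG c) c := by
  have h := (((hasDerivAt_id c).const_mul 2).mul (hasDerivAt_PhiG c)).add (hasDerivAt_phiG c)
  simp only [id_eq] at h
  refine h.congr_deriv ?_
  ring

lemma hasDerivAt_pG (c : ℝ) : HasDerivAt pG (2 * qG c) c := by
  have h1 : HasDerivAt (fun c : ℝ => 1 + 2 * c^2) (4 * c) c := by
    have := ((hasDerivAt_pow 2 c).const_mul 2).const_add 1
    refine this.congr_deriv ?_; ring
  have h := (h1.mul (hasDerivAt_PhiG c)).add ((hasDerivAt_id c).mul (hasDerivAt_phiG c))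
  simp only [id_eq] at h
  refine h.congr_deriv ?_
  unfold qG; ring

lemma hasDerivAt_uG (c : ℝ) : HasDerivAt uG (2 * phiG c * pG c) c := by
  have hP := hasDerivAt_PhiG c
  have hp := hasDerivAt_phiG c
  have h := (((hP.pow 2).const_mul 2).sub (hp.pow 2)).sub
    ((((hasDerivAt_id c).const_mul 2).mul hp).mul hP)
  simp only [id_eq] at h
  refine h.congr_deriv ?_
  unfold pG; simp only [Pi.mul_apply]; ring

lemma tendsto_sq_atBot : Tendsto (fun c : ℝ => c^2) atBot atTop := by
  have h : Tendsto (fun c : ℝ => (-c)^2) atBot atTop :=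
    (tendsto_pow_atTop two_ne_zero).comp tendsto_neg_atBot_atTop
  refine h.congr fun c => by ring

lemma lim_phiG : Tendsto phiG atBot (nhds 0) := by
  have h : Tendsto (fun c : ℝ => Real.exp (-c^2)) atBot (nhds 0) := by
    have := Real.tendsto_exp_neg_atTop_nhds_zero.comp tendsto_sq_atBot
    exact this
  have h' := h.const_mul (2 / Real.sqrt Real.pi)
  rw [mul_zero] at h'
  exact h'

lemma lim_mul_phiG (n : ℕ) : Tendsto (fun c => c^n * phiG c) atBot (nhds 0) := by
  apply squeeze_zero_norm' (a := fun c => (2 / Real.sqrt Real.pi) * |c^n * Real.exp c|)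
  · filter_upwards [eventually_le_atBot (-1:ℝ)] with c hc
    have he : Real.exp (-c^2) ≤ Real.exp c := Real.exp_le_exp.2 (by nlinarith)
    have : |c^n * phiG c| = (2 / Real.sqrt Real.pi) * (|c|^n * Real.exp (-c^2)) := by
      unfold phiG
      rw [abs_mul, abs_pow, abs_mul, abs_of_pos K_pos, abs_of_pos (Real.exp_pos _)]
      ring
    rw [Real.norm_eq_abs, this, abs_mul, abs_pow, abs_of_pos (Real.exp_pos _)]
    have h2 : |c|^n * Real.exp (-c^2) ≤ |c|^n * Real.exp c :=
      mul_le_mul_of_nonneg_left he (by positivity)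
    nlinarith [pow_nonneg (abs_nonneg c) n, Real.exp_pos c, K_pos]
  · have := ((lim_pow_exp n).abs).const_mul (2 / Real.sqrt Real.pi)
    simpa using this

lemma lim_mul_PhiG (n : ℕ) : Tendsto (fun c => c^n * PhiG c) atBot (nhds 0) := by
  apply squeeze_zero_norm' (a := fun c => (2 / Real.sqrt Real.pi) * |c^n * Real.exp c|)
  · filter_upwards [eventually_le_atBot (-1:ℝ)] with c hc
    have h1 := PhiG_pos c
    have h2 := PhiG_le hc
    rw [Real.norm_eq_abs, abs_mul, abs_pow, abs_mul, abs_pow,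
      abs_of_pos h1, abs_of_pos (Real.exp_pos _)]
    have : |c|^n * PhiG c ≤ |c|^n * ((2 / Real.sqrt Real.pi) * Real.exp c) :=
      mul_le_mul_of_nonneg_left h2 (by positivity)
    nlinarith [pow_nonneg (abs_nonneg c) n]
  · have := ((lim_pow_exp n).abs).const_mul (2 / Real.sqrt Real.pi)
    simpa using this

lemma lim_PhiG : Tendsto PhiG atBot (nhds 0) := by
  have := lim_mul_PhiG 0
  simpa using this

lemma lim_qG : Tendsto qG atBot (nhds 0) := by
  have h := ((lim_mul_PhiG 1).const_mul 2).add lim_phiG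
  simp only [mul_zero, add_zero, zero_add] at h
  refine h.congr fun c => ?_
  unfold qG; ring

lemma lim_pG : Tendsto pG atBot (nhds 0) := by
  have h := (lim_PhiG.add ((lim_mul_PhiG 2).const_mul 2)).add (lim_mul_phiG 1)
  simp only [mul_zero, add_zero, zero_add] at h
  refine h.congr fun c => ?_
  unfold pG; ring

lemma lim_uG : Tendsto uG atBot (nhds 0) := by
  have h := (((lim_PhiG.mul lim_PhiG).const_mul 2).sub (lim_phiG.mul lim_phiG)).sub
    (((lim_mul_phiG 1).mul lim_PhiG).const_mul 2)
  simp only [mul_zero, zero_mul, sub_zero, zero_sub, neg_zero] at h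
  refine h.congr fun c => ?_
  unfold uG; ring

lemma pos_of_deriv_pos {F F' : ℝ → ℝ} (hF : ∀ c, HasDerivAt F (F' c) c)
    (h' : ∀ c, 0 < F' c) (hlim : Tendsto F atBot (nhds 0)) : ∀ c, 0 < F c := by
  intro c
  have hmono : StrictMono F := strictMono_of_hasDerivAt_pos hF h'
  have h1 : (0:ℝ) ≤ F (c - 1) := by
    refine le_of_tendsto hlim ?_
    filter_upwards [eventually_le_atBot (c-1)] with x hx
    exact hmono.monotone hx
  have := hmono (show c - 1 < c by linarith)
  linarith

lemma qG_pos (c : ℝ) : 0 < qG c :=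
  pos_of_deriv_pos hasDerivAt_qG (fun c => by linarith [PhiG_pos c]) lim_qG c

lemma pG_pos (c : ℝ) : 0 < pG c :=
  pos_of_deriv_pos hasDerivAt_pG (fun c => by linarith [qG_pos c]) lim_pG c

lemma uG_pos (c : ℝ) : 0 < uG c :=
  pos_of_deriv_pos hasDerivAt_uG
    (fun c => by have := phiG_pos c; have := pG_pos c; positivity) lim_uG c

end Chain

section Final

lemma fErf'_eq (c : ℝ) : fErf' c = phiG c / PhiG c := rfl

lemma hasDerivAt_fErf (c : ℝ) : HasDerivAt fErf (fErf' c) c := by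
  have h := (hasDerivAt_PhiG c).log (PhiG_pos c).ne'
  exact h

lemma hasDerivAt_fErf' (c : ℝ) : HasDerivAt fErf' (fErf'' c) c := by
  have h := (hasDerivAt_phiG c).div (hasDerivAt_PhiG c) (PhiG_pos c).ne'
  have heq : (-2 * c * phiG c * PhiG c - phiG c * phiG c) / (PhiG c)^2 = fErf'' c := by
    rw [fErf'', fErf'_eq]
    have hP := (PhiG_pos c).ne'
    field_simp
  rw [← heq]
  exact h.congr_deriv rfl |>.congr_of_eventuallyEq (by rfl)

lemma main_ineq (c : ℝ) : -(fErf' c) * (1 + (1/2) * fErf'' c) < 0 := by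
  have hg : 0 < fErf' c := by
    rw [fErf'_eq]; exact div_pos (phiG_pos c) (PhiG_pos c)
  have hP := PhiG_pos c
  have h2 : 1 + (1/2) * fErf'' c = uG c / (2 * (PhiG c)^2) := by
    rw [fErf'', fErf'_eq, uG]
    field_simp
    ring
  have hpos : 0 < 1 + (1/2) * fErf'' c := by
    rw [h2]
    exact div_pos (uG_pos c) (by positivity)
  nlinarith

lemma hasDerivAt_Eerf (c : ℝ) :
    HasDerivAt Eerf (-(fErf' c) * (1 + (1/2) * fErf'' c)) c := by
  have h := ((hasDerivAt_fErf c).add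
    (((hasDerivAt_fErf' c).pow 2).const_mul (1/4))).neg
  refine h.congr_deriv ?_
  ring

end Final

/-- `E'(c) = −f'(c)(1 + (1/2) f''(c)) < 0` for all `c ∈ ℝ`, i.e. `E` is
strictly decreasing on `ℝ` (and hence has no critical point). -/
theorem stmt_2 :
    (∀ c : ℝ, HasDerivAt Eerf (-(fErf' c) * (1 + (1/2) * fErf'' c)) c ∧
      -(fErf' c) * (1 + (1/2) * fErf'' c) < 0)
    ∧ StrictAnti Eerf := by
  refine ⟨fun c => ⟨hasDerivAt_Eerf c, main_ineq c⟩, ?_⟩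
  exact strictAnti_of_hasDerivAt_neg hasDerivAt_Eerf main_ineq
end

section
/- Let D ⊆ ℝ^d be measurable with |D| > 0, ν > 0, and suppose K : ℝ^d → ℝ is locally integrable, even, with K(x) ≤ 2(1−δ₀) f ν log|x| + C₀ for all |x| > R₀, for some δ₀ ∈ (0,1), C₀ ∈ ℝ, R₀ > 0 and f > 0. Suppose further that for every n there exists x_n ∈ D with |D ∩ B_n(x_n)| ≥ (C/2) n^f for some fixed C > 0 and all n larger than some r'. Then, with μ_n the uniform probability density on D_n := D ∩ B_n(x_n), the energy E^ν[μ_n] = (1/(2|D_n|²)) ∫_{D_n}∫_{D_n} K(x−y) dx dy − ν log|D_n| satisfies E^ν[μ_n] → −∞ as n → ∞. -/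
open Real MeasureTheory Filter

private lemma stmt15_integral_le_lintegral {α : Type*} [MeasurableSpace α] {μ : Measure α}
    {g : α → ℝ} (h : ∫⁻ a, ENNReal.ofReal (g a) ∂μ ≠ ⊤) :
    ∫ a, g a ∂μ ≤ (∫⁻ a, ENNReal.ofReal (g a) ∂μ).toReal := by
  by_cases hg : Integrable g μ
  · have h1 : ∫ a, max (g a) 0 ∂μ
        = (∫⁻ a, ENNReal.ofReal (max (g a) 0) ∂μ).toReal :=
      integral_eq_lintegral_of_nonneg_ae (f := fun a => max (g a) 0)
        (Filter.Eventually.of_forall fun a => le_max_right _ _)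
        hg.pos_part.aestronglyMeasurable
    have h2 : (∫⁻ a, ENNReal.ofReal (max (g a) 0) ∂μ)
        = ∫⁻ a, ENNReal.ofReal (g a) ∂μ := by
      refine lintegral_congr fun a => ?_
      rcases le_total (g a) 0 with h0 | h0
      · simp [max_eq_right h0, ENNReal.ofReal_of_nonpos h0]
      · simp [max_eq_left h0]
    calc ∫ a, g a ∂μ ≤ ∫ a, max (g a) 0 ∂μ :=
          integral_mono hg hg.pos_part (fun a => le_max_left _ _)
      _ = (∫⁻ a, ENNReal.ofReal (g a) ∂μ).toReal := by rw [h1, h2]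
  · rw [integral_undef hg]; exact ENNReal.toReal_nonneg

set_option maxHeartbeats 1000000 in
/-- diffusion-dominated non-existence. If `K` is locally integrable, even
and bounded above by `2(1−δ₀) f ν log|x| + C₀` for `|x| > R₀`, and the domain `D`
satisfies the effective-volume-dimension lower bound `|D ∩ B_n(x_n)| ≥ (C/2) n^f`
for points `x_n ∈ D` and all large `n`, then the energies of the uniform densities
`μ_n` on `D_n = D ∩ B_n(x_n)`,
`E^ν[μ_n] = (1/(2|D_n|²)) ∫∫_{D_n×D_n} K(x−y) − ν log|D_n|`, tend to `−∞`. -/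
theorem stmt_15 (d : ℕ) (ν δ₀ C₀ R₀ f C r' : ℝ)
    (hν : 0 < ν) (hδ₀ : 0 < δ₀) (hδ₀' : δ₀ < 1) (hR₀ : 0 < R₀) (hf : 0 < f) (hC : 0 < C)
    (K : EuclideanSpace ℝ (Fin d) → ℝ) (hKloc : LocallyIntegrable K)
    (hKeven : ∀ z, K (-z) = K z)
    (hKbd : ∀ z : EuclideanSpace ℝ (Fin d), R₀ < ‖z‖ →
      K z ≤ 2 * (1 - δ₀) * f * ν * Real.log ‖z‖ + C₀)
    (D : Set (EuclideanSpace ℝ (Fin d))) (hD : MeasurableSet D) (hDpos : 0 < volume D)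
    (x : ℕ → EuclideanSpace ℝ (Fin d)) (hx : ∀ n, x n ∈ D)
    (hvol : ∀ n : ℕ, r' < n →
      C / 2 * (n : ℝ) ^ f ≤ (volume (D ∩ Metric.closedBall (x n) n)).toReal) :
    Tendsto (fun n : ℕ =>
        (1 / (2 * (volume (D ∩ Metric.closedBall (x n) n)).toReal ^ 2)) *
          (∫ q in (D ∩ Metric.closedBall (x n) n) ×ˢ (D ∩ Metric.closedBall (x n) n),
            K (q.1 - q.2))
        - ν * Real.log (volume (D ∩ Metric.closedBall (x n) n)).toReal)
      atTop atBot := by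
  set S : ℕ → Set (EuclideanSpace ℝ (Fin d)) :=
    fun n => D ∩ Metric.closedBall (x n) n with hSdef
  have hSeq : ∀ n : ℕ, D ∩ Metric.closedBall (x n) (n : ℝ) = S n := fun n => rfl
  simp only [hSeq]
  have hSm : ∀ n, MeasurableSet (S n) := fun n => hD.inter measurableSet_closedBall
  have hSfin : ∀ n, volume (S n) ≠ ⊤ := fun n =>
    ((measure_mono Set.inter_subset_right).trans_lt measure_closedBall_lt_top).ne
  -- measurable version of K
  have hKaem : AEMeasurable K volume := hKloc.aestronglyMeasurable.aemeasurable
  set K' : EuclideanSpace ℝ (Fin d) → ℝ := hKaem.mk K with hK'def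
  have hK'm : Measurable K' := hKaem.measurable_mk
  have hKK' : K =ᵐ[volume] K' := hKaem.ae_eq_mk
  -- the constant M
  set Me : ENNReal :=
    ∫⁻ z in Metric.closedBall (0 : EuclideanSpace ℝ (Fin d)) R₀, (‖K' z‖₊ : ENNReal) with hMedef
  have hMefin : Me ≠ ⊤ := by
    have h1 : IntegrableOn K (Metric.closedBall 0 R₀) volume :=
      hKloc.integrableOn_isCompact (isCompact_closedBall _ _)
    have h2 : Me = ∫⁻ z in Metric.closedBall (0 : EuclideanSpace ℝ (Fin d)) R₀,
        (‖K z‖₊ : ENNReal) := by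
      refine lintegral_congr_ae (ae_restrict_of_ae ?_)
      filter_upwards [hKK'] with z hz
      rw [hz]
    rw [h2]
    exact h1.2.ne
  set M : ℝ := Me.toReal with hMdef
  have hM0 : 0 ≤ M := ENNReal.toReal_nonneg
  -- quasi-measure-preserving subtraction
  have hqmp : Measure.QuasiMeasurePreserving
      (fun p : EuclideanSpace ℝ (Fin d) × EuclideanSpace ℝ (Fin d) => p.1 - p.2)
      (volume.prod volume) volume := quasiMeasurePreserving_sub volume volume
  -- the constant L n
  set L : ℕ → ℝ := fun n => 2 * (1 - δ₀) * f * ν * Real.log (2 * n) + C₀ with hLdef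
  have hcoef : 0 < 2 * (1 - δ₀) * f * ν := by
    have h1δ : 0 < 1 - δ₀ := by linarith
    positivity
  -- key integral bound
  have key : ∀ n : ℕ, 1 ≤ n → 0 ≤ L n →
      (∫ q in S n ×ˢ S n, K (q.1 - q.2)) ≤
        L n * (volume (S n)).toReal ^ 2 + M * (volume (S n)).toReal := by
    intro n hn hLn
    set μn := volume.restrict (S n) with hμn
    have hprodrw : (volume : Measure
        (EuclideanSpace ℝ (Fin d) × EuclideanSpace ℝ (Fin d))).restrict (S n ×ˢ S n)
        = μn.prod μn := by
      rw [Measure.volume_eq_prod, ← Measure.prod_restrict]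
    set g : EuclideanSpace ℝ (Fin d) → ENNReal :=
      (Metric.closedBall (0 : EuclideanSpace ℝ (Fin d)) R₀).indicator
        (fun z => (‖K' z‖₊ : ENNReal)) with hgdef
    have hgm : Measurable g :=
      (hK'm.nnnorm.coe_nnreal_ennreal).indicator measurableSet_closedBall
    -- a.e. equality of the two integrands on the product
    have haeeq : ∀ᵐ q ∂(μn.prod μn), K' (q.1 - q.2) = K (q.1 - q.2) := by
      have h1 : (fun q : EuclideanSpace ℝ (Fin d) × EuclideanSpace ℝ (Fin d) =>
          K' (q.1 - q.2)) =ᵐ[volume.prod volume] fun q => K (q.1 - q.2) :=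
        hqmp.ae_eq_comp hKK'.symm
      have h2 : μn.prod μn ≪ volume.prod volume := by
        rw [← hprodrw]
        exact Measure.absolutelyContinuous_of_le Measure.restrict_le_self
      exact h2.ae_eq h1
    have hmem : ∀ᵐ q ∂(μn.prod μn), q ∈ S n ×ˢ S n := by
      rw [← hprodrw]
      exact ae_restrict_mem ((hSm n).prod (hSm n))
    -- pointwise bound
    have hae : ∀ᵐ q ∂(μn.prod μn),
        ENNReal.ofReal (K' (q.1 - q.2)) ≤ ENNReal.ofReal (L n) + g (q.1 - q.2) := by
      filter_upwards [haeeq, hmem] with q hq1 hq2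
      rw [hq1]
      by_cases hR : R₀ < ‖q.1 - q.2‖
      · have hd1 : dist q.1 (x n) ≤ n := hq2.1.2
        have hd2 : dist q.2 (x n) ≤ n := hq2.2.2
        have hz2n : ‖q.1 - q.2‖ ≤ 2 * n := by
          have : dist q.1 q.2 ≤ dist q.1 (x n) + dist (x n) q.2 := dist_triangle _ _ _
          rw [dist_comm (x n) q.2] at this
          rw [← dist_eq_norm]
          linarith
        have hKle : K (q.1 - q.2) ≤ L n := by
          refine (hKbd _ hR).trans ?_
          have hlog : Real.log ‖q.1 - q.2‖ ≤ Real.log (2 * n) :=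
            Real.log_le_log (hR₀.trans hR) hz2n
          have := mul_le_mul_of_nonneg_left hlog hcoef.le
          simp only [hLdef]
          linarith
        exact (ENNReal.ofReal_le_ofReal hKle).trans le_self_add
      · push_neg at hR
        have hball : q.1 - q.2 ∈ Metric.closedBall (0 : EuclideanSpace ℝ (Fin d)) R₀ := by
          simpa [Metric.mem_closedBall, dist_zero_right] using hR
        have : ENNReal.ofReal (K (q.1 - q.2)) ≤ g (q.1 - q.2) := by
          rw [hgdef, Set.indicator_of_mem hball, ← hq1]
          exact Real.ofReal_le_enorm _
        exact this.trans le_add_self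
    -- the lintegral bound
    have hA : (∫⁻ q, ENNReal.ofReal (K' (q.1 - q.2)) ∂(μn.prod μn))
        ≤ ENNReal.ofReal (L n) * (volume (S n) * volume (S n)) + Me * volume (S n) := by
      calc (∫⁻ q, ENNReal.ofReal (K' (q.1 - q.2)) ∂(μn.prod μn))
          ≤ ∫⁻ q, (ENNReal.ofReal (L n) + g (q.1 - q.2)) ∂(μn.prod μn) :=
            lintegral_mono_ae hae
        _ = ENNReal.ofReal (L n) * (μn.prod μn) Set.univ
            + ∫⁻ q, g (q.1 - q.2) ∂(μn.prod μn) := by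
            rw [lintegral_add_left measurable_const, lintegral_const]
        _ = ENNReal.ofReal (L n) * (volume (S n) * volume (S n))
            + ∫⁻ q, g (q.1 - q.2) ∂(μn.prod μn) := by
            rw [← Set.univ_prod_univ, Measure.prod_prod, hμn,
              Measure.restrict_apply_univ]
        _ ≤ ENNReal.ofReal (L n) * (volume (S n) * volume (S n)) + Me * volume (S n) := by
            refine add_le_add le_rfl ?_
            have hTon : (∫⁻ q, g (q.1 - q.2) ∂(μn.prod μn))
                = ∫⁻ a, (∫⁻ y, g (a - y) ∂μn) ∂μn :=
              lintegral_prod (fun q => g (q.1 - q.2))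
                ((hgm.comp measurable_sub).aemeasurable)
            rw [hTon]
            have hinner : ∀ a, (∫⁻ y, g (a - y) ∂μn) ≤ Me := by
              intro a
              calc (∫⁻ y, g (a - y) ∂μn) ≤ ∫⁻ y, g (a - y) ∂volume :=
                    by rw [hμn]; exact setLIntegral_le_lintegral _ _
                _ = ∫⁻ z, g z ∂volume :=
                    (Measure.measurePreserving_sub_left volume a).lintegral_comp hgm
                _ = Me := by
                    rw [hgdef, lintegral_indicator measurableSet_closedBall]
            calc (∫⁻ a, (∫⁻ y, g (a - y) ∂μn) ∂μn) ≤ ∫⁻ _, Me ∂μn :=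
                  lintegral_mono hinner
              _ = Me * volume (S n) := by
                  rw [lintegral_const, hμn, Measure.restrict_apply_univ]
    -- relate to the integrand with K
    have hAeq : (∫⁻ q in S n ×ˢ S n, ENNReal.ofReal (K (q.1 - q.2)))
        = ∫⁻ q, ENNReal.ofReal (K' (q.1 - q.2)) ∂(μn.prod μn) := by
      rw [hprodrw]
      refine lintegral_congr_ae ?_
      filter_upwards [haeeq] with q hq
      rw [hq]
    have hfin : ENNReal.ofReal (L n) * (volume (S n) * volume (S n)) + Me * volume (S n) ≠ ⊤ :=
      ENNReal.add_ne_top.mpr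
        ⟨ENNReal.mul_ne_top ENNReal.ofReal_ne_top
          (ENNReal.mul_ne_top (hSfin n) (hSfin n)), ENNReal.mul_ne_top hMefin (hSfin n)⟩
    have hIle := stmt15_integral_le_lintegral
      (μ := (volume : Measure
        (EuclideanSpace ℝ (Fin d) × EuclideanSpace ℝ (Fin d))).restrict (S n ×ˢ S n))
      (g := fun q => K (q.1 - q.2))
      (by rw [hAeq]; exact fun h => hfin (top_le_iff.mp (h ▸ hA)))
    refine hIle.trans ?_
    have h3 : ((∫⁻ q in S n ×ˢ S n, ENNReal.ofReal (K (q.1 - q.2)))).toReal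
        ≤ (ENNReal.ofReal (L n) * (volume (S n) * volume (S n)) + Me * volume (S n)).toReal :=
      ENNReal.toReal_mono hfin (by rw [hAeq]; exact hA)
    refine h3.trans_eq ?_
    rw [ENNReal.toReal_add (ENNReal.mul_ne_top ENNReal.ofReal_ne_top
        (ENNReal.mul_ne_top (hSfin n) (hSfin n))) (ENNReal.mul_ne_top hMefin (hSfin n)),
      ENNReal.toReal_mul, ENNReal.toReal_mul, ENNReal.toReal_mul,
      ENNReal.toReal_ofReal hLn]
    ring
  -- asymptotics
  have hlogn : Tendsto (fun n : ℕ => Real.log n) atTop atTop :=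
    Real.tendsto_log_atTop.comp tendsto_natCast_atTop_atTop
  have hLtop : Tendsto (fun n : ℕ => L n) atTop atTop := by
    refine tendsto_atTop_add_const_right _ _ ?_
    refine Tendsto.const_mul_atTop hcoef ?_
    exact Real.tendsto_log_atTop.comp
      ((tendsto_natCast_atTop_atTop (R := ℝ)).const_mul_atTop two_pos)
  set c : ℝ := (1 - δ₀) * f * ν * Real.log 2 + C₀ / 2 + M / C - ν * Real.log (C / 2) with hcdef
  have hφ : Tendsto (fun n : ℕ => -(δ₀ * f * ν) * Real.log n + c) atTop atBot := by
    refine tendsto_atBot_add_const_right _ _ ?_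
    exact (tendsto_const_mul_atBot_of_neg (by nlinarith)).mpr hlogn
  refine tendsto_atBot_mono' atTop ?_ hφ
  have hr' : ∀ᶠ n : ℕ in atTop, r' < (n : ℝ) :=
    (tendsto_natCast_atTop_atTop (R := ℝ)).eventually_gt_atTop r'
  filter_upwards [hr', eventually_ge_atTop 1, hLtop.eventually_ge_atTop 0]
    with n hn1 hn2 hn3
  have hn0 : (0 : ℝ) < n := by exact_mod_cast hn2
  set V : ℝ := (volume (S n)).toReal with hVdef
  have hVlb : C / 2 * (n : ℝ) ^ f ≤ V := hvol n hn1
  have hnf1 : (1 : ℝ) ≤ (n : ℝ) ^ f := by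
    calc (1 : ℝ) = (1 : ℝ) ^ f := (Real.one_rpow f).symm
      _ ≤ (n : ℝ) ^ f := Real.rpow_le_rpow zero_le_one (by exact_mod_cast hn2) hf.le
  have hVC : C / 2 ≤ V := le_trans (by nlinarith) hVlb
  have hV0 : 0 < V := lt_of_lt_of_le (by positivity) hVC
  have hI := key n hn2 hn3
  -- bound the first term
  have h1 : 1 / (2 * V ^ 2) * (∫ q in S n ×ˢ S n, K (q.1 - q.2))
      ≤ L n / 2 + M / (2 * V) := by
    have := mul_le_mul_of_nonneg_left hI (by positivity : (0:ℝ) ≤ 1 / (2 * V ^ 2))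
    refine this.trans_eq ?_
    field_simp
    ring
  have h2 : M / (2 * V) ≤ M / C :=
    div_le_div_of_nonneg_left hM0 hC (by linarith)
  have h3 : Real.log (C / 2) + f * Real.log n ≤ Real.log V := by
    have := Real.log_le_log (by positivity) hVlb
    rwa [Real.log_mul (by positivity) (by positivity), Real.log_rpow hn0] at this
  have h4 : ν * (Real.log (C / 2) + f * Real.log n) ≤ ν * Real.log V :=
    mul_le_mul_of_nonneg_left h3 hν.le
  have hlog2n : Real.log (2 * n) = Real.log 2 + Real.log n :=
    Real.log_mul two_ne_zero hn0.ne'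
  have hLval : L n = 2 * (1 - δ₀) * f * ν * (Real.log 2 + Real.log (n : ℝ)) + C₀ := by
    simp only [hLdef]; rw [hlog2n]
  calc 1 / (2 * V ^ 2) * (∫ q in S n ×ˢ S n, K (q.1 - q.2)) - ν * Real.log V
      ≤ L n / 2 + M / C - ν * (Real.log (C / 2) + f * Real.log n) := by linarith
    _ ≤ -(δ₀ * f * ν) * Real.log n + c := by
        rw [hLval, hcdef]; ring_nf; nlinarith [hν.le]
end
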